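/- Let V ⊆ ℝ^n be a regular space and P, Q ∈ V be r-paths. Write P + Q = p^1 + ... + p^k as a sum of primitive vectors each conforming to P + Q. Then exactly two of the summands p^i satisfy p^i_r = +1. -/
import Mathlib


open Finset

variable {n : ℕ}

/-- The support of a vector. -/
def supp (x : Fin n → ℝ) : Set (Fin n) := {j | x j ≠ 0}

/-- A nonzero vector of `V` is elementary if no nonzero vector of `V` has support
properly contained in its support. -/
def IsElementary (V : Submodule ℝ (Fin n → ℝ)) (x : Fin n → ℝ) : Prop :=
  x ∈ V ∧ x ≠ 0 ∧ ∀ y ∈ V, y ≠ 0 → ¬ (supp y ⊂ supp x)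

/-- A primitive vector: elementary with entries in `{-1, 0, 1}`. -/
def IsPrimitive (V : Submodule ℝ (Fin n → ℝ)) (x : Fin n → ℝ) : Prop :=
  IsElementary V x ∧ ∀ j, x j ∈ ({-1, 0, 1} : Set ℝ)

/-- `y` conforms to `x`. -/
def Conforms (y x : Fin n → ℝ) : Prop := ∀ j, y j ≠ 0 → y j * x j > 0

/-- A regular space: the kernel of a totally unimodular matrix. -/
def IsRegularSpace (V : Submodule ℝ (Fin n → ℝ)) : Prop :=
  ∃ (m : ℕ) (A : Matrix (Fin m) (Fin n) ℝ),
    A.IsTotallyUnimodular ∧ V = LinearMap.ker A.mulVecLin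

/-- An `r`-path: a primitive vector with value `+1` at `r`. -/
def IsRPath (V : Submodule ℝ (Fin n → ℝ)) (r : Fin n) (P : Fin n → ℝ) : Prop :=
  IsPrimitive V P ∧ P r = 1

/-- Feasibility with respect to capacity `c` (no constraint at `r`). -/
def Feasible (c : Fin n → ℝ) (r : Fin n) (f : Fin n → ℝ) : Prop :=
  ∀ j, j ≠ r → 0 ≤ f j ∧ f j ≤ c j

/-- An `r`-path `P` is augmenting for the flow `f`. -/
def Augmenting (V : Submodule ℝ (Fin n → ℝ)) (c : Fin n → ℝ) (r : Fin n)
    (f P : Fin n → ℝ) : Prop :=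
  IsRPath V r P ∧ ∃ ε : ℝ, 0 < ε ∧ Feasible c r (f + ε • P)

/-- The 1-norm. -/
def onorm (x : Fin n → ℝ) : ℝ := ∑ j, |x j|

/-- A shortest augmenting `r`-path. -/
def ShortestAug (V : Submodule ℝ (Fin n → ℝ)) (c : Fin n → ℝ) (r : Fin n)
    (f P : Fin n → ℝ) : Prop :=
  Augmenting V c r f P ∧ ∀ Q, Augmenting V c r f Q → onorm P ≤ onorm Q

/-- `g` is obtained from `f` by maximal augmentation along `P`. -/
def MaxAug (c : Fin n → ℝ) (r : Fin n) (f P g : Fin n → ℝ) : Prop :=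
  ∃ ε : ℝ, 0 < ε ∧ g = f + ε • P ∧ Feasible c r g ∧
    ∀ ε' : ℝ, ε < ε' → ¬ Feasible c r (f + ε' • P)

/-- A conformal primitive decomposition of `P + Q` in which `M` and `J` are the two
`r`-path summands (`M` playing the role of `P ∧ Q` and `J` of `P ∨ Q`). -/
def MeetJoinDecomp (V : Submodule ℝ (Fin n → ℝ)) (r : Fin n)
    (P Q M J : Fin n → ℝ) : Prop :=
  ∃ (k : ℕ) (p : Fin k → Fin n → ℝ) (a b : Fin k),
    (∀ i, IsPrimitive V (p i)) ∧ (∀ i, Conforms (p i) (P + Q)) ∧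
    (∑ i, p i) = P + Q ∧ a ≠ b ∧ p a = M ∧ p b = J ∧
    p a r = 1 ∧ p b r = 1 ∧ ∀ i, p i r = 1 → i = a ∨ i = b

theorem stmt5 (V : Submodule ℝ (Fin n → ℝ)) (hV : IsRegularSpace V)
    (r : Fin n) (P Q : Fin n → ℝ) (hP : IsRPath V r P) (hQ : IsRPath V r Q)
    (k : ℕ) (p : Fin k → Fin n → ℝ)
    (hprim : ∀ i, IsPrimitive V (p i))
    (hconf : ∀ i, Conforms (p i) (P + Q))
    (hsum : (∑ i, p i) = P + Q) :
    ∃ a b : Fin k, a ≠ b ∧ p a r = 1 ∧ p b r = 1 ∧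
      ∀ i, p i r = 1 → i = a ∨ i = b := by
  have hPQr : (P + Q) r = 2 := by
    simp [Pi.add_apply, hP.2, hQ.2]; norm_num
  have h01 : ∀ i, p i r = 0 ∨ p i r = 1 := by
    intro i
    rcases (hprim i).2 r with h | h | h
    · exfalso
      have hne : p i r ≠ 0 := by rw [h]; norm_num
      have := hconf i r hne
      rw [h, hPQr] at this; linarith
    · exact Or.inl h
    · exact Or.inr h
  have hsumr : ∑ i, p i r = 2 := by
    have := congrFun hsum r
    rw [hPQr] at this
    simpa [Finset.sum_apply] using this
  set S : Finset (Fin k) := Finset.univ.filter (fun i => p i r = 1) with hS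
  have hsum2 : ∑ i, p i r = (S.card : ℝ) := by
    rw [← Finset.sum_filter_add_sum_filter_not Finset.univ (fun i => p i r = 1)]
    have h1 : ∑ i ∈ Finset.univ.filter (fun i => p i r = 1), p i r = (S.card : ℝ) := by
      rw [Finset.sum_congr rfl (fun i hi => (Finset.mem_filter.mp hi).2)]
      simp [hS]
    have h2 : ∑ i ∈ Finset.univ.filter (fun i => ¬ p i r = 1), p i r = 0 := by
      apply Finset.sum_eq_zero
      intro i hi
      rcases h01 i with h | h
      · exact h
      · exact absurd h (Finset.mem_filter.mp hi).2
    rw [h1, h2, add_zero]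
  have hcard : S.card = 2 := by
    have : (S.card : ℝ) = 2 := by rw [← hsum2, hsumr]
    exact_mod_cast this
  obtain ⟨a, b, hab, hSab⟩ := Finset.card_eq_two.mp hcard
  refine ⟨a, b, hab, ?_, ?_, ?_⟩
  · have : a ∈ S := hSab ▸ Finset.mem_insert_self a {b}
    exact (Finset.mem_filter.mp this).2
  · have : b ∈ S := hSab ▸ Finset.mem_insert_of_mem (Finset.mem_singleton_self b)
    exact (Finset.mem_filter.mp this).2
  · intro i hi
    have : i ∈ S := Finset.mem_filter.mpr ⟨Finset.mem_univ i, hi⟩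
    rw [hSab] at this
    simpa using this
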